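/- For every n ≥ 2, the code A_n of Construction 8 is a complete non-cyclic ternary 1-skew-tolerant Gray code of length n that begins with the all-zero word and ends with e_1: it lists all 3^n vectors of (Z/3)^n, consecutive codewords differ by ±1 (mod 3) in exactly one coordinate, and consecutive transition positions differ by at most 1. -/

import Mathlib

/-- Codewords `c` and `d` differ exactly at coordinate `i` (1-based), by `±1` there. -/
def TransAt {m : ℕ} (c d : List (ZMod m)) (i : ℕ) : Prop :=
  1 ≤ i ∧ i ≤ c.length ∧ c.length = d.length ∧
  c.take (i-1) = d.take (i-1) ∧ c.drop i = d.drop i ∧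
  (d.getD (i-1) 0 = c.getD (i-1) 0 + 1 ∨ d.getD (i-1) 0 = c.getD (i-1) 0 - 1)

/-- `C` is a cyclic Gray code with transition sequence `δ`. -/
def CyclicGrayWith {m : ℕ} (C : List (List (ZMod m))) (δ : ℕ → ℕ) : Prop :=
  C.Nodup ∧ ∀ i < C.length,
    TransAt (C.getD i []) (C.getD ((i+1) % C.length) []) (δ i)

/-- `C` is a non-cyclic (path) Gray code with transition sequence `δ`. -/
def PathGrayWith {m : ℕ} (C : List (List (ZMod m))) (δ : ℕ → ℕ) : Prop :=
  C.Nodup ∧ ∀ i, i + 1 < C.length →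
    TransAt (C.getD i []) (C.getD (i+1) []) (δ i)

/-- cyclic `k`-skew-tolerance. -/
def SkewCyc (P : ℕ) (δ : ℕ → ℕ) (k : ℤ) : Prop :=
  ∀ i < P, |(δ i : ℤ) - (δ ((i+1) % P) : ℤ)| ≤ k

/-- non-cyclic `k`-skew-tolerance. -/
def SkewPath (P : ℕ) (δ : ℕ → ℕ) (k : ℤ) : Prop :=
  ∀ i, i + 2 < P → |(δ i : ℤ) - (δ (i+1) : ℤ)| ≤ k

/-- Construction 8, ternary codes `A_n` (`n ≥ 2`). -/
def t8A : ℕ → List (List (ZMod 3))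
  | 0 => [] | 1 => []
  | 2 => [[0,0],[0,1],[0,2],[2,2],[2,0],[2,1],[1,1],[1,2],[1,0]]
  | (n+3) =>
    let P := t8A (n+2)
    let c := P.headI
    let d := P.getLastD []
    let Q := P.tail.dropLast
    [c ++ [0], c ++ [2], c ++ [1]] ++
    Q.map (· ++ [1]) ++ Q.reverse.map (· ++ [0]) ++ Q.map (· ++ [2]) ++
    [d ++ [2], d ++ [1], d ++ [0]]

/-! ### Auxiliary lemmas -/

lemma transAt_append {m : ℕ} {c d : List (ZMod m)} {i : ℕ} (x : ZMod m)
    (h : TransAt c d i) : TransAt (c ++ [x]) (d ++ [x]) i := by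
  obtain ⟨h1, h2, h3, h4, h5, h6⟩ := h
  refine ⟨h1, by simp; omega, by simp [h3], ?_, ?_, ?_⟩
  · rw [List.take_append_of_le_length (by omega), List.take_append_of_le_length (by omega), h4]
  · rw [List.drop_append_of_le_length (by omega), List.drop_append_of_le_length (by omega), h5]
  · rwa [List.getD_append _ _ _ _ (by omega), List.getD_append _ _ _ _ (by omega)]

lemma transAt_symm {m : ℕ} {c d : List (ZMod m)} {i : ℕ}
    (h : TransAt c d i) : TransAt d c i := by
  obtain ⟨h1, h2, h3, h4, h5, h6⟩ := h
  refine ⟨h1, by omega, h3.symm, h4.symm, h5.symm, ?_⟩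
  rcases h6 with h6 | h6
  · right; rw [h6]; ring
  · left; rw [h6]; ring

lemma transAt_last {m : ℕ} (w : List (ZMod m)) (x y : ZMod m)
    (h : y = x + 1 ∨ y = x - 1) : TransAt (w ++ [x]) (w ++ [y]) (w.length + 1) := by
  refine ⟨by omega, by simp, by simp, ?_, ?_, ?_⟩
  · simp [List.take_append_of_le_length]
  · rw [List.drop_eq_nil_of_le (by simp), List.drop_eq_nil_of_le (by simp)]
  · simp only [Nat.add_sub_cancel, List.getD_eq_getElem?_getD, List.getElem?_concat_length,
      Option.getD_some]
    exact h

lemma nodup_of_complete {k : ℕ} {m : ℕ} [NeZero m] {N : List (List (ZMod m))}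
    (hlen : N.length = m ^ k)
    (hcompl : ∀ c : List (ZMod m), c.length = k → c ∈ N) : N.Nodup := by
  classical
  set f : List (ZMod m) → (Fin k → ZMod m) := fun l i => l.getD i 0 with hf
  apply List.Nodup.of_map f
  have hmem : ∀ g : Fin k → ZMod m, g ∈ N.map f := by
    intro g
    refine List.mem_map.2 ⟨List.ofFn g, hcompl _ (by simp), ?_⟩
    funext i
    simp [hf, List.getD_eq_getElem?_getD, List.getElem?_ofFn, i.2]
  have huniv : (N.map f).toFinset = Finset.univ := Finset.eq_univ_iff_forall.2
    (fun g => List.mem_toFinset.2 (hmem g))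
  have hcard : (N.map f).dedup.length = (N.map f).length := by
    rw [← List.card_toFinset, huniv]
    simp [hlen, Fintype.card_fun]
  have := List.Sublist.eq_of_length (List.dedup_sublist (N.map f)) hcard
  rw [← this]
  exact List.nodup_dedup _

lemma t8A_succ (k : ℕ) : t8A (k+3) =
    [(t8A (k+2)).headI ++ [0], (t8A (k+2)).headI ++ [2], (t8A (k+2)).headI ++ [1]] ++
    ((t8A (k+2)).tail.dropLast).map (· ++ [1]) ++
    ((t8A (k+2)).tail.dropLast).reverse.map (· ++ [0]) ++
    ((t8A (k+2)).tail.dropLast).map (· ++ [2]) ++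
    [(t8A (k+2)).getLastD [] ++ [2], (t8A (k+2)).getLastD [] ++ [1],
     (t8A (k+2)).getLastD [] ++ [0]] := rfl

def nextδ (L n : ℕ) (δ : ℕ → ℕ) : ℕ → ℕ := fun i =>
  if i < 2 then n+1
  else if i < L+2 then δ (i-2)
  else if i = L+2 then n+1
  else if i < 2*L+2 then δ (2*L+2-i)
  else if i = 2*L+2 then n+1
  else if i < 3*L+3 then δ (i-2*L-2)
  else n+1

section
variable {L n : ℕ} {δ : ℕ → ℕ} {i : ℕ} (hL : 7 ≤ L)
include hL

lemma nextδ_a (h : i < 2) : nextδ L n δ i = n+1 := by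
  unfold nextδ; split_ifs <;> first | rfl | (exfalso; omega)
lemma nextδ_b (h1 : 2 ≤ i) (h2 : i < L+2) : nextδ L n δ i = δ (i-2) := by
  unfold nextδ; split_ifs <;> first | rfl | (exfalso; omega)
lemma nextδ_c : nextδ L n δ (L+2) = n+1 := by
  unfold nextδ; split_ifs <;> first | rfl | (exfalso; omega)
lemma nextδ_d (h1 : L+3 ≤ i) (h2 : i < 2*L+2) : nextδ L n δ i = δ (2*L+2-i) := by
  unfold nextδ; split_ifs <;> first | rfl | (exfalso; omega)
lemma nextδ_e : nextδ L n δ (2*L+2) = n+1 := by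
  unfold nextδ; split_ifs <;> first | rfl | (exfalso; omega)
lemma nextδ_f (h1 : 2*L+3 ≤ i) (h2 : i < 3*L+3) : nextδ L n δ i = δ (i-2*L-2) := by
  unfold nextδ; split_ifs <;> first | rfl | (exfalso; omega)
lemma nextδ_g (h : 3*L+3 ≤ i) : nextδ L n δ i = n+1 := by
  unfold nextδ; split_ifs <;> first | rfl | (exfalso; omega)

end

lemma getD_map_append (Q : List (List (ZMod 3))) (x : ZMod 3) {j : ℕ} (hj : j < Q.length) :
    (Q.map (· ++ [x])).getD j [] = Q.getD j [] ++ [x] := by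
  rw [List.getD_eq_getElem _ _ (by simpa using hj), List.getD_eq_getElem _ _ hj,
    List.getElem_map]

lemma getD_reverse (Q : List (List (ZMod 3))) {j : ℕ} (hj : j < Q.length) :
    Q.reverse.getD j [] = Q.getD (Q.length - 1 - j) [] := by
  rw [List.getD_eq_getElem _ _ (by simpa using hj),
    List.getD_eq_getElem _ _ (by omega), List.getElem_reverse]

lemma abs_helper (a b : ℕ) (h1 : a ≤ b + 1) (h2 : b ≤ a + 1) : |(a:ℤ) - (b:ℤ)| ≤ 1 := by
  rw [abs_le]; omega

def Good (n : ℕ) (δ : ℕ → ℕ) : Prop :=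
  t8A n = (List.replicate n (0 : ZMod 3)) ::
      ((t8A n).tail.dropLast ++ [(1 : ZMod 3) :: List.replicate (n-1) 0]) ∧
  (∀ c ∈ t8A n, c.length = n) ∧
  (t8A n).length = 3 ^ n ∧
  (∀ c : List (ZMod 3), c.length = n → c ∈ t8A n) ∧
  (∀ i, i + 1 < 3 ^ n → TransAt ((t8A n).getD i []) ((t8A n).getD (i+1) []) (δ i)) ∧
  (∀ i, i + 2 < 3 ^ n → |(δ i : ℤ) - (δ (i+1) : ℤ)| ≤ 1) ∧
  δ 0 = n ∧ δ 1 = n ∧ δ (3 ^ n - 3) = n ∧ δ (3 ^ n - 2) = n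

def δ₂ : ℕ → ℕ := fun i => if i = 2 ∨ i = 5 then 1 else 2

lemma good_two : Good 2 δ₂ := by
  refine ⟨by decide, by decide, by decide, ?_, ?_, ?_, by decide, by decide, by decide, by decide⟩
  · intro c hc
    match c, hc with
    | [a, b], _ => revert a b; decide
  · intro i hi
    have : i < 8 := by norm_num at hi; omega
    interval_cases i <;> (unfold TransAt δ₂; decide)
  · intro i hi
    have : i < 7 := by norm_num at hi; omega
    interval_cases i <;> simp [δ₂] <;> decide

lemma good_step (m : ℕ) (δ : ℕ → ℕ) (h : Good (m+2) δ) :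
    Good (m+3) (nextδ ((t8A (m+2)).tail.dropLast).length (m+2) δ) := by
  obtain ⟨hstruct, helem, hlen, hcompl, htrans, hskew, hδ0, hδ1, hδ3, hδ4⟩ := h
  set c : List (ZMod 3) := List.replicate (m+2) 0 with hc
  set d : List (ZMod 3) := (1 : ZMod 3) :: List.replicate (m+1) 0 with hd
  set Q : List (List (ZMod 3)) := (t8A (m+2)).tail.dropLast with hQ
  set L : ℕ := Q.length with hLdef
  have hP : 3 ^ (m+2) = L + 2 := by
    rw [← hlen, hstruct]; simp; rfl
  have hL : 7 ≤ L := by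
    have : 9 ≤ 3 ^ (m+2) := by
      calc 9 = 3^2 := by norm_num
      _ ≤ 3 ^ (m+2) := Nat.pow_le_pow_right (by norm_num) (by omega)
    omega
  have hP3 : 3 ^ (m+3) = 3*L+6 := by rw [pow_succ, hP]; ring
  have hclen : c.length = m+2 := by simp [hc]
  have hdlen : d.length = m+2 := by simp [hd]
  have hQmem : ∀ q ∈ Q, q.length = m+2 := by
    intro q hq
    apply helem
    rw [hstruct]
    exact List.mem_cons_of_mem _ (List.mem_append_left _ hq)
  have hQgetDlen : ∀ j, j < L → (Q.getD j []).length = m+2 := by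
    intro j hj
    rw [List.getD_eq_getElem _ _ hj]
    exact hQmem _ (List.getElem_mem _)
  -- head/last
  have hhead : (t8A (m+2)).headI = c := by rw [hstruct]; rfl
  have hlast : (t8A (m+2)).getLastD [] = d := by
    rw [hstruct]
    show ((c :: Q) ++ [d]).getLastD [] = d
    exact List.getLastD_concat
  have hN : t8A (m+3) =
      (c ++ [0]) :: (c ++ [2]) :: (c ++ [1]) ::
      (Q.map (· ++ [1]) ++ (Q.reverse.map (· ++ [0]) ++ (Q.map (· ++ [2]) ++
      [d ++ [2], d ++ [1], d ++ [0]]))) := by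
    rw [t8A_succ, hhead, hlast, ← hQ]
    simp [List.append_assoc]
  -- getD lemmas on A
  have hA0 : (t8A (m+2)).getD 0 [] = c := by rw [hstruct]; rfl
  have hAQ : ∀ j, j < L → (t8A (m+2)).getD (j+1) [] = Q.getD j [] := by
    intro j hj
    rw [hstruct, List.getD_cons_succ, List.getD_append _ _ _ _ hj]
  have hAd : (t8A (m+2)).getD (L+1) [] = d := by
    rw [hstruct, List.getD_cons_succ, List.getD_append_right _ _ _ _ (le_refl _)]
    simp [hd]
  -- getD lemmas on N
  have hg0 : (t8A (m+3)).getD 0 [] = c ++ [0] := by rw [hN]; rfl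
  have hg1 : (t8A (m+3)).getD 1 [] = c ++ [2] := by rw [hN]; rfl
  have hg2 : (t8A (m+3)).getD 2 [] = c ++ [1] := by rw [hN]; rfl
  have hrest : ∀ j, (t8A (m+3)).getD (j+3) [] =
      (Q.map (· ++ [1]) ++ (Q.reverse.map (· ++ [0]) ++ (Q.map (· ++ [2]) ++
      [d ++ [2], d ++ [1], d ++ [0]]))).getD j [] := by
    intro j; rw [hN]; rfl
  have hgQ1 : ∀ j, j < L → (t8A (m+3)).getD (j+3) [] = Q.getD j [] ++ [1] := by
    intro j hj
    rw [hrest, List.getD_append _ _ _ _ (by simpa using hj), getD_map_append _ _ hj]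
  have hgQR : ∀ j, j < L → (t8A (m+3)).getD (L+j+3) [] = Q.getD (L-1-j) [] ++ [0] := by
    intro j hj
    rw [show L+j+3 = (L+j)+3 by ring, hrest,
      List.getD_append_right _ _ _ _ (by simp; try omega),
      List.getD_append _ _ _ _ (by simp; try omega)]
    rw [show L + j - (Q.map (· ++ [1])).length = j by simp [hLdef]]
    rw [getD_map_append _ _ (by simpa using hj), getD_reverse _ hj]
  have hgQ2 : ∀ j, j < L → (t8A (m+3)).getD (2*L+j+3) [] = Q.getD j [] ++ [2] := by
    intro j hj
    rw [show 2*L+j+3 = (2*L+j)+3 by ring, hrest,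
      List.getD_append_right _ _ _ _ (by simp; try omega),
      List.getD_append_right _ _ _ _ (by simp; try omega),
      List.getD_append _ _ _ _ (by simp; try omega)]
    have e : 2*L + j - (Q.map (· ++ [1])).length - (Q.reverse.map (· ++ [0])).length = j := by
      simp; try omega
    rw [e, getD_map_append _ _ hj]
  have hg3 : ∀ r : Fin 3, (t8A (m+3)).getD (3*L+3+r) [] = d ++ [[2,1,0].getD r 0] := by
    intro r
    rw [show 3*L+3+(r:ℕ) = (3*L+r)+3 by ring, hrest,
      List.getD_append_right _ _ _ _ (by simp; try omega),
      List.getD_append_right _ _ _ _ (by simp; try omega),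
      List.getD_append_right _ _ _ _ (by simp; try omega)]
    have e : 3*L + (r:ℕ) - (Q.map (· ++ [1])).length - (Q.reverse.map (· ++ [0])).length
        - (Q.map (· ++ [2])).length = r := by simp; try omega
    rw [e]
    fin_cases r <;> rfl
  have hgd2 : (t8A (m+3)).getD (3*L+3) [] = d ++ [2] := hg3 0
  have hgd1 : (t8A (m+3)).getD (3*L+4) [] = d ++ [1] := hg3 1
  have hgd0 : (t8A (m+3)).getD (3*L+5) [] = d ++ [0] := hg3 2
  -- derived transitions of A
  have tcQ : TransAt c (Q.getD 0 []) (δ 0) := by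
    have := htrans 0 (by omega)
    rwa [hA0, hAQ 0 (by omega)] at this
  have tQ : ∀ j, j+1 < L → TransAt (Q.getD j []) (Q.getD (j+1) []) (δ (j+1)) := by
    intro j hj
    have := htrans (j+1) (by omega)
    rwa [hAQ j (by omega), hAQ (j+1) (by omega)] at this
  have tQd : TransAt (Q.getD (L-1) []) d (δ L) := by
    have h1 := htrans L (by omega)
    have e := hAQ (L-1) (by omega)
    rw [show L-1+1 = L by omega] at e
    rwa [e, hAd] at h1
  have hzmod : ∀ y : ZMod 3, y = 0 ∨ y = 1 ∨ y = 2 := by decide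
  refine ⟨?_, ?_, ?_, ?_, ?_, ?_, ?_, ?_, ?_, ?_⟩
  · -- structure
    have hM : t8A (m+3) = (c ++ [0]) ::
        (((c ++ [2]) :: (c ++ [1]) ::
        (Q.map (· ++ [1]) ++ (Q.reverse.map (· ++ [0]) ++ (Q.map (· ++ [2]) ++
        [d ++ [2], d ++ [1]])))) ++ [d ++ [0]]) := by
      rw [hN]; simp
    rw [hM, List.tail_cons, List.dropLast_concat]
    congr 1
    · rw [hc]; exact List.replicate_succ'.symm
    · congr 2
      rw [hd]
      show (1 :: List.replicate (m+1) (0:ZMod 3)) ++ [0] = 1 :: List.replicate (m+3-1) 0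
      rw [List.cons_append]
      congr 1
      exact List.replicate_succ'.symm
  · -- element lengths
    intro z hz
    rw [hN] at hz
    simp only [List.mem_cons, List.mem_append, List.mem_map, List.mem_reverse] at hz
    rcases hz with rfl|rfl|rfl|⟨q,hq,rfl⟩|⟨q,hq,rfl⟩|⟨q,hq,rfl⟩|rfl|rfl|rfl|h
    · simp [hclen]
    · simp [hclen]
    · simp [hclen]
    · simp [hQmem q hq]
    · simp [hQmem q hq]
    · simp [hQmem q hq]
    · simp [hdlen]
    · simp [hdlen]
    · simp [hdlen]
    · simp at h
  · -- length
    rw [hN, hP3]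
    simp [← hLdef]
    omega
  · -- completeness
    intro l hl
    have hne : l ≠ [] := by intro h; rw [h] at hl; simp at hl
    have hw : l.dropLast.length = m+2 := by
      rw [List.length_dropLast, hl]
      omega
    have hwA : l.dropLast ∈ t8A (m+2) := hcompl _ hw
    rw [hstruct] at hwA
    have main : ∀ z : List (ZMod 3),
        (z ∈ [c++[0],c++[2],c++[1]] ∨ z ∈ Q.map (· ++ [1]) ∨ z ∈ Q.reverse.map (· ++ [0]) ∨
          z ∈ Q.map (· ++ [2]) ∨ z ∈ [d++[2],d++[1],d++[0]]) → z ∈ t8A (m+3) := by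
      intro z hz
      rw [t8A_succ, hhead, hlast, ← hQ]
      simp only [List.mem_append]
      tauto
    rw [← List.dropLast_append_getLast hne]
    simp only [List.mem_cons, List.mem_append] at hwA
    rcases hwA with hw1 | hw1 | hw1
    · rw [hw1]
      rcases hzmod (l.getLast hne) with hx | hx | hx <;> rw [hx] <;>
        exact main _ (Or.inl (by simp))
    · rcases hzmod (l.getLast hne) with hx | hx | hx <;> rw [hx]
      · exact main _ (Or.inr (Or.inr (Or.inl
          (List.mem_map.2 ⟨l.dropLast, List.mem_reverse.2 hw1, rfl⟩))))
      · exact main _ (Or.inr (Or.inl (List.mem_map.2 ⟨l.dropLast, hw1, rfl⟩)))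
      · exact main _ (Or.inr (Or.inr (Or.inr (Or.inl
          (List.mem_map.2 ⟨l.dropLast, hw1, rfl⟩)))))
    · rcases hw1 with hw1 | hw1
      swap
      · simp at hw1
      have hw2 : l.dropLast = d := hw1
      rw [hw2]
      rcases hzmod (l.getLast hne) with hx | hx | hx <;> rw [hx] <;>
        exact main _ (Or.inr (Or.inr (Or.inr (Or.inr (by simp)))))
  · -- transitions
    intro i hi
    rw [hP3] at hi
    have hcase : i = 0 ∨ i = 1 ∨ i = 2 ∨ (3 ≤ i ∧ i ≤ L+1) ∨ i = L+2 ∨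
        (L+3 ≤ i ∧ i ≤ 2*L+1) ∨ i = 2*L+2 ∨ (2*L+3 ≤ i ∧ i ≤ 3*L+1) ∨
        i = 3*L+2 ∨ i = 3*L+3 ∨ i = 3*L+4 := by omega
    rcases hcase with rfl | rfl | rfl | ⟨ha, hb⟩ | rfl | ⟨ha, hb⟩ | rfl | ⟨ha, hb⟩
      | rfl | rfl | rfl
    · rw [hg0, show (0:ℕ)+1 = 1 from rfl, hg1, nextδ_a hL (by omega)]
      have := transAt_last c 0 2 (Or.inr (by decide))
      rwa [hclen] at this
    · rw [hg1, show (1:ℕ)+1 = 2 from rfl, hg2, nextδ_a hL (by omega)]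
      have := transAt_last c 2 1 (Or.inr (by decide))
      rwa [hclen] at this
    · rw [hg2, show (2:ℕ)+1 = 0+3 from rfl, hgQ1 0 (by omega),
        nextδ_b hL (by omega) (by omega), show (2:ℕ)-2 = 0 from rfl]
      exact transAt_append 1 tcQ
    · obtain ⟨j, rfl⟩ : ∃ j, i = j+3 := ⟨i-3, by omega⟩
      rw [hgQ1 j (by omega), show j+3+1 = (j+1)+3 by ring, hgQ1 (j+1) (by omega),
        nextδ_b hL (by omega) (by omega), show j+3-2 = j+1 by omega]
      exact transAt_append 1 (tQ j (by omega))
    · have e1 : (t8A (m+3)).getD (L+2) [] = Q.getD (L-1) [] ++ [1] := by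
        rw [show L+2 = (L-1)+3 by omega]; exact hgQ1 (L-1) (by omega)
      have e2 : (t8A (m+3)).getD (L+2+1) [] = Q.getD (L-1) [] ++ [0] := by
        have := hgQR 0 (by omega)
        rwa [show L+0+3 = L+2+1 by ring, show L-1-0 = L-1 by omega] at this
      rw [e1, e2, nextδ_c hL]
      have := transAt_last (Q.getD (L-1) []) 1 0 (Or.inr (by decide))
      rwa [hQgetDlen (L-1) (by omega)] at this
    · obtain ⟨j, rfl⟩ : ∃ j, i = L+j+3 := ⟨i-L-3, by omega⟩
      rw [hgQR j (by omega), show L+j+3+1 = L+(j+1)+3 by ring, hgQR (j+1) (by omega),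
        nextδ_d hL (by omega) (by omega),
        show 2*L+2-(L+j+3) = L-1-j by omega, show L-1-(j+1) = L-2-j by omega]
      have := transAt_append 0 (transAt_symm (tQ (L-2-j) (by omega)))
      rwa [show L-2-j+1 = L-1-j by omega] at this
    · have e1 : (t8A (m+3)).getD (2*L+2) [] = Q.getD 0 [] ++ [0] := by
        have := hgQR (L-1) (by omega)
        rwa [show L+(L-1)+3 = 2*L+2 by omega, show L-1-(L-1) = 0 by omega] at this
      have e2 : (t8A (m+3)).getD (2*L+2+1) [] = Q.getD 0 [] ++ [2] := by
        have := hgQ2 0 (by omega)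
        rwa [show 2*L+0+3 = 2*L+2+1 by ring] at this
      rw [e1, e2, nextδ_e hL]
      have := transAt_last (Q.getD 0 []) 0 2 (Or.inr (by decide))
      rwa [hQgetDlen 0 (by omega)] at this
    · obtain ⟨j, rfl⟩ : ∃ j, i = 2*L+j+3 := ⟨i-2*L-3, by omega⟩
      rw [hgQ2 j (by omega), show 2*L+j+3+1 = 2*L+(j+1)+3 by ring, hgQ2 (j+1) (by omega),
        nextδ_f hL (by omega) (by omega), show 2*L+j+3-2*L-2 = j+1 by omega]
      exact transAt_append 2 (tQ j (by omega))
    · have e1 : (t8A (m+3)).getD (3*L+2) [] = Q.getD (L-1) [] ++ [2] := by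
        have := hgQ2 (L-1) (by omega)
        rwa [show 2*L+(L-1)+3 = 3*L+2 by omega] at this
      rw [e1, show 3*L+2+1 = 3*L+3 by ring, hgd2,
        nextδ_f hL (by omega) (by omega), show 3*L+2-2*L-2 = L by omega]
      exact transAt_append 2 tQd
    · rw [hgd2, show 3*L+3+1 = 3*L+4 by ring, hgd1, nextδ_g hL (by omega)]
      have := transAt_last d 2 1 (Or.inr (by decide))
      rwa [hdlen] at this
    · rw [hgd1, show 3*L+4+1 = 3*L+5 by ring, hgd0, nextδ_g hL (by omega)]
      have := transAt_last d 1 0 (Or.inr (by decide))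
      rwa [hdlen] at this
  · -- skew
    intro i hi
    rw [hP3] at hi
    have hδL1 : δ (L-1) = m+2 := by
      rw [show L-1 = 3^(m+2)-3 by omega]; exact hδ3
    have hδL : δ L = m+2 := by
      rw [show L = 3^(m+2)-2 by omega]; exact hδ4
    have hcase : i = 0 ∨ i = 1 ∨ (2 ≤ i ∧ i ≤ L) ∨ i = L+1 ∨ i = L+2 ∨
        (L+3 ≤ i ∧ i ≤ 2*L) ∨ i = 2*L+1 ∨ i = 2*L+2 ∨ (2*L+3 ≤ i ∧ i ≤ 3*L+1) ∨
        i = 3*L+2 ∨ i = 3*L+3 := by omega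
    rcases hcase with rfl | rfl | ⟨ha, hb⟩ | rfl | rfl | ⟨ha, hb⟩ | rfl | rfl | ⟨ha, hb⟩
      | rfl | rfl
    · rw [nextδ_a hL (by omega), nextδ_a hL (by omega)]
      exact abs_helper _ _ (by omega) (by omega)
    · rw [nextδ_a hL (by omega), nextδ_b hL (by omega) (by omega),
        show (1:ℕ)+1-2 = 0 from rfl, hδ0]
      exact abs_helper _ _ (by omega) (by omega)
    · rw [nextδ_b hL (by omega) (by omega), nextδ_b hL (by omega) (by omega),
        show i+1-2 = (i-2)+1 by omega]
      exact hskew (i-2) (by omega)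
    · rw [nextδ_b hL (by omega) (by omega), show L+1-2 = L-1 by omega, hδL1,
        show L+1+1 = L+2 by ring, nextδ_c hL]
      exact abs_helper _ _ (by omega) (by omega)
    · rw [nextδ_c hL, nextδ_d hL (by omega) (by omega),
        show 2*L+2-(L+2+1) = L-1 by omega, hδL1]
      exact abs_helper _ _ (by omega) (by omega)
    · rw [nextδ_d hL (by omega) (by omega), nextδ_d hL (by omega) (by omega),
        show 2*L+2-i = (2*L+2-(i+1))+1 by omega]
      rw [abs_sub_comm]
      exact hskew (2*L+2-(i+1)) (by omega)
    · rw [nextδ_d hL (by omega) (by omega), show 2*L+2-(2*L+1) = 1 by omega, hδ1,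
        show 2*L+1+1 = 2*L+2 by ring, nextδ_e hL]
      exact abs_helper _ _ (by omega) (by omega)
    · rw [nextδ_e hL, nextδ_f hL (by omega) (by omega),
        show 2*L+2+1-2*L-2 = 1 by omega, hδ1]
      exact abs_helper _ _ (by omega) (by omega)
    · rw [nextδ_f hL (by omega) (by omega), nextδ_f hL (by omega) (by omega),
        show i+1-2*L-2 = (i-2*L-2)+1 by omega]
      exact hskew (i-2*L-2) (by omega)
    · rw [nextδ_f hL (by omega) (by omega), show 3*L+2-2*L-2 = L by omega, hδL,
        show 3*L+2+1 = 3*L+3 by ring, nextδ_g hL (by omega)]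
      exact abs_helper _ _ (by omega) (by omega)
    · rw [nextδ_g hL (by omega), nextδ_g hL (by omega)]
      exact abs_helper _ _ (by omega) (by omega)
  · exact nextδ_a hL (by omega)
  · exact nextδ_a hL (by omega)
  · rw [hP3, show 3*L+6-3 = 3*L+3 by omega, nextδ_g hL (by omega)]
  · rw [hP3, show 3*L+6-2 = 3*L+4 by omega, nextδ_g hL (by omega)]


theorem stmt16 : ∀ n : ℕ, 2 ≤ n →
    (∀ c ∈ t8A n, c.length = n) ∧ (t8A n).length = 3 ^ n ∧
    (∀ c : List (ZMod 3), c.length = n → c ∈ t8A n) ∧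
    (t8A n).getD 0 [] = List.replicate n (0 : ZMod 3) ∧
    (t8A n).getLastD [] = (1 : ZMod 3) :: List.replicate (n-1) 0 ∧
    ∃ δ : ℕ → ℕ, PathGrayWith (t8A n) δ ∧ SkewPath (t8A n).length δ 1 := by
  have good_exists : ∀ n : ℕ, 2 ≤ n → ∃ δ, Good n δ := by
    intro n hn
    obtain ⟨k, rfl⟩ : ∃ k, n = k + 2 := ⟨n - 2, by omega⟩
    clear hn
    induction k with
    | zero => exact ⟨δ₂, good_two⟩
    | succ k ih =>
      obtain ⟨δ, hδ⟩ := ih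
      exact ⟨_, good_step k δ hδ⟩
  intro n hn
  obtain ⟨δ, hstruct, helem, hlen, hcompl, htrans, hskew, _, _, _, _⟩ := good_exists n hn
  have hnodup : (t8A n).Nodup := nodup_of_complete (m := 3) hlen hcompl
  refine ⟨helem, hlen, hcompl, ?_, ?_, δ, ⟨hnodup, ?_⟩, ?_⟩
  · rw [hstruct]; rfl
  · rw [hstruct]
    show ((_ :: _) ++ [_]).getLastD [] = _
    exact List.getLastD_concat
  · intro i hi
    exact htrans i (by rwa [hlen] at hi)
  · intro i hi
    exact hskew i (by rwa [hlen] at hi)
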